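/- Let q ≡ 1 (mod 4) be a prime power, n ≥ 1, A ∈ GL_n(F_q), b ∈ F_q^n. The permutation of F_q^n given by x ↦ Ax + b is even if and only if det(A) is a square in F_q^*. -/

import Mathlib

set_option linter.unusedSectionVars false

open Equiv Equiv.Perm Matrix

section Aux

lemma intUnits_eq_one_of_odd_pow {u : ℤˣ} {m : ℕ} (hm : m % 2 = 1) (h : u ^ m = 1) : u = 1 := by
  have h2 : u ^ m = u ^ (m % 2) := by
    conv_lhs => rw [← Nat.div_add_mod m 2]
    rw [pow_add, pow_mul, Int.units_sq, one_pow, one_mul]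
  rw [h2, hm, pow_one] at h
  exact h

variable {F : Type} [Field F] [Fintype F] [DecidableEq F] {n : ℕ}

/-- The permutation of `Fin n → F` induced by an invertible matrix. -/
def permHom : (Matrix (Fin n) (Fin n) F)ˣ →* Equiv.Perm (Fin n → F) where
  toFun U :=
    { toFun := (U : Matrix (Fin n) (Fin n) F).mulVec
      invFun := (↑U⁻¹ : Matrix (Fin n) (Fin n) F).mulVec
      left_inv := fun x => by
        rw [Matrix.mulVec_mulVec, U.inv_mul, Matrix.one_mulVec]
      right_inv := fun x => by
        rw [Matrix.mulVec_mulVec, U.mul_inv, Matrix.one_mulVec] }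
  map_one' := by
    ext x
    simp [Matrix.one_mulVec]
  map_mul' := fun U V => by
    ext x
    simp [Matrix.mulVec_mulVec]

@[simp] lemma permHom_apply (U : (Matrix (Fin n) (Fin n) F)ˣ) (x : Fin n → F) :
    permHom U x = (U : Matrix (Fin n) (Fin n) F).mulVec x := rfl

/-- Multiplication by a unit as a permutation of `F`. -/
def mulPermHom : Fˣ →* Equiv.Perm F where
  toFun u := Equiv.mulLeft₀ (u : F) u.ne_zero
  map_one' := by ext x; simp
  map_mul' := fun u v => by ext x; simp [mul_assoc]

@[simp] lemma mulPermHom_apply (u : Fˣ) (x : F) : mulPermHom u x = (u : F) * x := rfl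

/-- The sign character of `Fˣ`. -/
def chiHom : Fˣ →* ℤˣ := (Equiv.Perm.sign).comp (mulPermHom (F := F))

end Aux

section Chi
variable {F : Type} [Field F] [Fintype F] [DecidableEq F]

lemma chiHom_generator {g : Fˣ} (hg : ∀ x : Fˣ, x ∈ Subgroup.zpowers g)
    (hq2 : Fintype.card F % 2 = 1) (hq5 : 5 ≤ Fintype.card F) :
    chiHom g = -1 := by
  set σ : Equiv.Perm F := mulPermHom g with hσ
  have hcardu : Fintype.card Fˣ = Fintype.card F - 1 := Fintype.card_units (α := F)
  have hgne : (g : F) ≠ 1 := by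
    intro h
    have hg1 : g = 1 := Units.ext h
    subst hg1
    have h2 : ∀ x : Fˣ, x = 1 := by
      intro x
      have hx := hg x
      rwa [Subgroup.zpowers_one_eq_bot, Subgroup.mem_bot] at hx
    have : Fintype.card Fˣ = 1 := Fintype.card_eq_one_iff.2 ⟨1, fun x => h2 x⟩
    omega
  have hfix : ∀ y : F, σ y ≠ y ↔ y ≠ 0 := by
    intro y
    constructor
    · intro h h0; apply h; simp [hσ, h0]
    · intro h0 h
      apply hgne
      have : (g : F) * y = 1 * y := by simpa [hσ] using h
      exact mul_right_cancel₀ h0 this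
  have hcyc : σ.IsCycle := by
    refine ⟨1, ?_, ?_⟩
    · simp [hσ, hgne]
    · intro y hy
      have hy0 : y ≠ 0 := (hfix y).1 hy
      obtain ⟨k, hk⟩ := hg (Units.mk0 y hy0)
      have hk' : g ^ k = Units.mk0 y hy0 := hk
      refine ⟨k, ?_⟩
      have hzp : σ ^ k = mulPermHom (g ^ k) := by rw [hσ, ← _root_.map_zpow]
      rw [hzp]
      simp [hk']
  have hsupp : σ.support = {(0 : F)}ᶜ := by
    ext y
    simp [Equiv.Perm.mem_support, hfix y]
  have hcard : σ.support.card = Fintype.card F - 1 := by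
    rw [hsupp, Finset.card_compl]
    simp
  have := hcyc.sign
  rw [hcard] at this
  have heven : Even (Fintype.card F - 1) := by
    obtain ⟨c, hc⟩ : ∃ c, Fintype.card F = 2 * c + 1 := ⟨Fintype.card F / 2, by omega⟩
    exact ⟨c, by omega⟩
  show Equiv.Perm.sign σ = -1
  rw [this, heven.neg_one_pow]

lemma chiHom_eq_one_iff (hq2 : Fintype.card F % 2 = 1) (hq5 : 5 ≤ Fintype.card F) (u : Fˣ) :
    chiHom u = 1 ↔ IsSquare u := by
  obtain ⟨g, hg⟩ := IsCyclic.exists_generator (α := Fˣ)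
  have hgs : chiHom g = -1 := chiHom_generator hg hq2 hq5
  obtain ⟨k, hk⟩ := hg u
  have hk' : g ^ k = u := hk
  constructor
  · intro h1
    rcases Int.even_or_odd k with ⟨m, hm⟩ | ⟨m, hm⟩
    · exact ⟨g ^ m, by rw [← hk', hm, _root_.zpow_add]⟩
    · exfalso
      have hneg : chiHom u = -1 := by
        rw [← hk', _root_.map_zpow, hgs, hm, _root_.zpow_add, _root_.zpow_mul, zpow_one]
        norm_num
      rw [h1] at hneg
      exact absurd hneg.symm (by decide)
  · rintro ⟨v, rfl⟩
    rw [_root_.map_mul, ← sq, Int.units_sq]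

end Chi

section Mat
variable {F : Type} [Field F] [Fintype F] [DecidableEq F] {n : ℕ}

lemma intUnits_odd_pow {u : ℤˣ} {m : ℕ} (hm : m % 2 = 1) : u ^ m = u := by
  conv_lhs => rw [← Nat.div_add_mod m 2]
  rw [pow_add, pow_mul, Int.units_sq, one_pow, one_mul, hm, pow_one]

lemma transvection_pow {i j : Fin n} (hij : i ≠ j) (c : F) (k : ℕ) :
    (Matrix.transvection i j c) ^ k = Matrix.transvection i j ((k : F) * c) := by
  induction k with
  | zero => simp [Matrix.transvection_zero]
  | succ k ih =>
    rw [pow_succ, ih, Matrix.transvection_mul_transvection_same i j hij]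
    congr 1
    push_cast
    ring

lemma sign_permHom_transvection (hq2 : Fintype.card F % 2 = 1)
    (U : (Matrix (Fin n) (Fin n) F)ˣ) (t : Matrix.TransvectionStruct (Fin n) F)
    (hU : (U : Matrix (Fin n) (Fin n) F) = t.toMatrix) :
    Equiv.Perm.sign (permHom U) = 1 := by
  have hUq : U ^ Fintype.card F = 1 := by
    apply Units.ext
    rw [Units.val_pow_eq_pow_val, hU,
      show t.toMatrix = Matrix.transvection t.i t.j t.c from rfl,
      transvection_pow t.hij, FiniteField.cast_card_eq_zero, zero_mul,
      Matrix.transvection_zero, Units.val_one]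
  apply intUnits_eq_one_of_odd_pow hq2
  rw [← _root_.map_pow, ← _root_.map_pow, hUq, _root_.map_one, _root_.map_one]

lemma sign_permHom_transvec_list (hq2 : Fintype.card F % 2 = 1)
    (L : List (Matrix.TransvectionStruct (Fin n) F)) (U : (Matrix (Fin n) (Fin n) F)ˣ)
    (hU : (U : Matrix (Fin n) (Fin n) F) = (L.map Matrix.TransvectionStruct.toMatrix).prod) :
    Equiv.Perm.sign (permHom U) = 1 := by
  induction L generalizing U with
  | nil =>
    have hU1 : U = 1 := Units.ext (by simpa using hU)
    rw [hU1, _root_.map_one, _root_.map_one]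
  | cons t L ih =>
    have h1 : IsUnit t.toMatrix := by
      rw [Matrix.isUnit_iff_isUnit_det, Matrix.TransvectionStruct.det]
      exact isUnit_one
    have h2 : IsUnit (L.map Matrix.TransvectionStruct.toMatrix).prod := by
      rw [Matrix.isUnit_iff_isUnit_det, Matrix.TransvectionStruct.det_toMatrix_prod]
      exact isUnit_one
    have hsplit : U = h1.unit * h2.unit := by
      apply Units.ext
      rw [Units.val_mul, h1.unit_spec, h2.unit_spec, hU, List.map_cons, List.prod_cons]
    rw [hsplit, _root_.map_mul, _root_.map_mul,
      sign_permHom_transvection hq2 h1.unit t h1.unit_spec,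
      ih h2.unit h2.unit_spec, one_mul]

lemma isUnit_diagonal_of {v : Fin n → F} (h : ∀ j, v j ≠ 0) :
    IsUnit (Matrix.diagonal v) := by
  rw [Matrix.isUnit_iff_isUnit_det, Matrix.det_diagonal]
  exact (Finset.prod_ne_zero_iff.2 fun j _ => h j).isUnit

lemma sign_permHom_dilation (hq2 : Fintype.card F % 2 = 1) (i : Fin n) (c : Fˣ)
    (U : (Matrix (Fin n) (Fin n) F)ˣ)
    (hU : (U : Matrix (Fin n) (Fin n) F)
      = Matrix.diagonal (fun j => if j = i then (c : F) else 1)) :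
    Equiv.Perm.sign (permHom U) = chiHom c := by
  have key := Equiv.Perm.sign_eq_sign_of_equiv (permHom U)
      (Equiv.prodCongrLeft (fun _ : ({j : Fin n // j ≠ i} → F) => mulPermHom c))
      (Equiv.funSplitAt i F) ?_
  · rw [key, Equiv.Perm.sign_prodCongrLeft, Finset.prod_const, Finset.card_univ]
    apply intUnits_odd_pow
    rw [Fintype.card_fun, Nat.pow_mod, hq2, Nat.one_pow]
  · intro x
    have h1 : ∀ j : Fin n, ((U : Matrix (Fin n) (Fin n) F).mulVec x) j
        = (if j = i then (c : F) else 1) * x j := by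
      intro j
      rw [hU, Matrix.mulVec_diagonal]
    refine Prod.ext ?_ ?_
    · simp [h1]
    · funext j
      simp [h1, j.2]

lemma sign_permHom_diagonal (hq2 : Fintype.card F % 2 = 1) (d : Fin n → F)
    (hd : ∀ j, d j ≠ 0) (s : Finset (Fin n)) (U : (Matrix (Fin n) (Fin n) F)ˣ)
    (hU : (U : Matrix (Fin n) (Fin n) F)
      = Matrix.diagonal (fun j => if j ∈ s then d j else 1)) :
    Equiv.Perm.sign (permHom U) = ∏ j ∈ s, chiHom (Units.mk0 (d j) (hd j)) := by
  induction s using Finset.induction_on generalizing U with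
  | empty =>
    have hU1 : U = 1 := Units.ext (by simpa using hU)
    rw [hU1, _root_.map_one, _root_.map_one, Finset.prod_empty]
  | @insert a s ha ih =>
    have h1 : IsUnit (Matrix.diagonal (fun j => if j = a then d a else 1)) :=
      isUnit_diagonal_of (fun j => by by_cases h : j = a <;> simp [h, hd a])
    have h2 : IsUnit (Matrix.diagonal (fun j => if j ∈ s then d j else 1)) :=
      isUnit_diagonal_of (fun j => by by_cases h : j ∈ s <;> simp [h, hd j])
    have hsplit : U = h1.unit * h2.unit := by
      apply Units.ext
      rw [Units.val_mul, h1.unit_spec, h2.unit_spec, hU, Matrix.diagonal_mul_diagonal]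
      apply congrArg Matrix.diagonal
      funext j
      by_cases hja : j = a
      · subst hja
        simp [ha]
      · by_cases hjs : j ∈ s <;> simp [hja, hjs]
    rw [hsplit, _root_.map_mul, _root_.map_mul, Finset.prod_insert ha,
      sign_permHom_dilation hq2 a (Units.mk0 (d a) (hd a)) h1.unit h1.unit_spec,
      ih h2.unit h2.unit_spec]

lemma addRight_pow_apply (b : Fin n → F) (k : ℕ) (x : Fin n → F) :
    ((Equiv.addRight b) ^ k) x = x + k • b := by
  induction k generalizing x with
  | zero => simp
  | succ k ih =>
    rw [pow_succ, Equiv.Perm.mul_apply, ih]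
    show ((Equiv.addRight b) x) + k • b = x + (k + 1) • b
    rw [succ_nsmul]
    show x + b + k • b = x + (k • b + b)
    abel

lemma sign_addRight (hq2 : Fintype.card F % 2 = 1) (b : Fin n → F) :
    Equiv.Perm.sign (Equiv.addRight b) = 1 := by
  apply intUnits_eq_one_of_odd_pow hq2
  rw [← _root_.map_pow]
  have hb : (Equiv.addRight b : Equiv.Perm (Fin n → F)) ^ (Fintype.card F) = 1 := by
    ext x
    rw [addRight_pow_apply]
    have h0 : (Fintype.card F) • b = 0 := by
      funext j
      simp [nsmul_eq_mul, FiniteField.cast_card_eq_zero]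
    simp [h0]
  rw [hb, _root_.map_one]

lemma unitsIsSquare_iff (u : Fˣ) : IsSquare (u : F) ↔ IsSquare u := by
  constructor
  · rintro ⟨a, ha⟩
    have ha0 : a ≠ 0 := by
      rintro rfl
      exact u.ne_zero (by simp [ha])
    exact ⟨Units.mk0 a ha0, Units.ext (by simp [ha])⟩
  · rintro ⟨v, rfl⟩
    exact ⟨v, by simp⟩

end Mat

/-- For `q ≡ 1 (mod 4)`, the permutation `x ↦ Ax + b` of
`F_q^n` is even if and only if `det A` is a square in `F_q^*`. -/
theorem stmt12 (q n : ℕ) (hq : q % 4 = 1) (hn : 1 ≤ n)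
    (F : Type) [Field F] [Fintype F] [DecidableEq F] (hcard : Fintype.card F = q)
    (A : Matrix (Fin n) (Fin n) F) (hA : IsUnit A) (b : Fin n → F)
    (σ : Equiv.Perm (Fin n → F)) (hσ : ∀ x, σ x = A.mulVec x + b) :
    Equiv.Perm.sign σ = 1 ↔ IsSquare A.det := by
  have hq2 : Fintype.card F % 2 = 1 := by rw [hcard]; omega
  have hq5 : 5 ≤ Fintype.card F := by
    have h1 : 1 < Fintype.card F := Fintype.one_lt_card
    omega
  obtain ⟨L, L', D, hM⟩ := Matrix.Pivot.exists_list_transvec_mul_diagonal_mul_list_transvec A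
  have hdetA : A.det = ∏ j, D j := by
    rw [hM]
    simp [Matrix.det_mul, Matrix.det_diagonal]
  have hdet0 : A.det ≠ 0 := by
    intro h
    have h2 := hA
    rw [Matrix.isUnit_iff_isUnit_det, h] at h2
    simpa using h2
  have hD0 : ∀ j, D j ≠ 0 := by
    intro j hj
    apply hdet0
    rw [hdetA]
    exact Finset.prod_eq_zero (Finset.mem_univ j) hj
  have hP : IsUnit (L.map Matrix.TransvectionStruct.toMatrix).prod := by
    rw [Matrix.isUnit_iff_isUnit_det, Matrix.TransvectionStruct.det_toMatrix_prod]
    exact isUnit_one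
  have hP' : IsUnit (L'.map Matrix.TransvectionStruct.toMatrix).prod := by
    rw [Matrix.isUnit_iff_isUnit_det, Matrix.TransvectionStruct.det_toMatrix_prod]
    exact isUnit_one
  have hDu : IsUnit (Matrix.diagonal D) := isUnit_diagonal_of hD0
  have hsplit : hA.unit = hP.unit * hDu.unit * hP'.unit := by
    apply Units.ext
    rw [Units.val_mul, Units.val_mul, hP.unit_spec, hDu.unit_spec, hP'.unit_spec,
      hA.unit_spec, hM]
  have hσeq : σ = (Equiv.addRight b) * (permHom hA.unit) := by
    ext x
    rw [Equiv.Perm.mul_apply, hσ x, permHom_apply, hA.unit_spec]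
    rfl
  have hUdiag : (hDu.unit : Matrix (Fin n) (Fin n) F)
      = Matrix.diagonal (fun j => if j ∈ (Finset.univ : Finset (Fin n)) then D j else 1) := by
    rw [hDu.unit_spec]
    apply congrArg Matrix.diagonal
    funext j
    simp
  have hsign : Equiv.Perm.sign σ = chiHom (∏ j, Units.mk0 (D j) (hD0 j)) := by
    rw [hσeq, _root_.map_mul, sign_addRight hq2, one_mul, hsplit, _root_.map_mul,
      _root_.map_mul, _root_.map_mul, _root_.map_mul,
      sign_permHom_transvec_list hq2 L hP.unit hP.unit_spec,
      sign_permHom_transvec_list hq2 L' hP'.unit hP'.unit_spec,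
      sign_permHom_diagonal hq2 D hD0 Finset.univ hDu.unit hUdiag, one_mul, mul_one,
      ← _root_.map_prod (chiHom (F := F)) (fun j => Units.mk0 (D j) (hD0 j)) Finset.univ]
  rw [hsign, chiHom_eq_one_iff hq2 hq5]
  have hval : ((∏ j, Units.mk0 (D j) (hD0 j) : Fˣ) : F) = A.det := by
    rw [hdetA, ← Units.coeHom_apply, _root_.map_prod]
    simp
  rw [← unitsIsSquare_iff, hval]
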